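/- Suppose the limiting value g(∞) = lim_{r→∞} g(r) exists and is positive and finite, and fix R > 0. Then there exists M > 0 such that for all x ∈ ℝⁿ with |x| ≥ M and all y ∈ ℝⁿ with |y| < R, one has Γ(x+y) − Γ(y) > (1/2) g(∞) |x|. -/
import Mathlib


open MeasureTheory Filter Set Topology

/-- The energy kernel `Γ(x) = G(|x|)`, where `G(r) = ∫₀^r g(s) ds`. -/
noncomputable def Gam {n : ℕ} (g : ℝ → ℝ)
    (x : EuclideanSpace ℝ (Fin n)) : ℝ :=
  ∫ s in (0:ℝ)..‖x‖, g s

theorem renormalized_kernel_lower_bound {n : ℕ} (hn : 1 ≤ n)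
    (g : ℝ → ℝ) (hg_cont : ContinuousOn g (Ici 0)) (hg0 : g 0 = 0)
    (ginf : ℝ) (hginf_pos : 0 < ginf) (hg_lim : Tendsto g atTop (𝓝 ginf))
    (R : ℝ) (hR : 0 < R) :
    ∃ M : ℝ, 0 < M ∧ ∀ x y : EuclideanSpace ℝ (Fin n), M ≤ ‖x‖ → ‖y‖ < R →
      (1 / 2) * ginf * ‖x‖ < Gam g (x + y) - Gam g y := by
  have h34 : (3/4 : ℝ) * ginf < ginf := by linarith
  obtain ⟨r1, hr1⟩ := (hg_lim.eventually (eventually_gt_nhds h34)).exists_forall_of_atTop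
  set r0 : ℝ := max r1 R with hr0def
  have hr0R : R ≤ r0 := le_max_right _ _
  have hr0pos : 0 < r0 := lt_of_lt_of_le hR hr0R
  obtain ⟨B, hB⟩ := (isCompact_Icc (a := (0:ℝ)) (b := r0)).exists_bound_of_continuousOn
    (hg_cont.mono Icc_subset_Ici_self)
  have hB0 : 0 ≤ B := le_trans (norm_nonneg _) (hB 0 ⟨le_refl _, hr0pos.le⟩)
  have hint : ∀ a b : ℝ, 0 ≤ a → 0 ≤ b → IntervalIntegrable g volume a b := by
    intro a b ha hb
    exact (hg_cont.mono (fun s hs => le_trans (le_min ha hb) hs.1)).intervalIntegrable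
  refine ⟨max (r0 + R + 1) (3*(R+r0) + (4*B*r0 + 4)/ginf), ?_, ?_⟩
  · exact lt_of_lt_of_le (by positivity) (le_max_left _ _)
  intro x y hx hy
  set a : ℝ := ‖y‖ with hadef
  set b : ℝ := ‖x + y‖ with hbdef
  have ha0 : 0 ≤ a := norm_nonneg _
  have hb0 : 0 ≤ b := norm_nonneg _
  have har0 : a ≤ r0 := le_trans hy.le hr0R
  have hxb : ‖x‖ - R ≤ b := by
    have h1 : ‖x‖ ≤ ‖x + y‖ + ‖y‖ := by
      calc ‖x‖ = ‖(x + y) - y‖ := by rw [add_sub_cancel_right]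
      _ ≤ ‖x + y‖ + ‖y‖ := norm_sub_le _ _
    linarith
  have hxM : r0 + R + 1 ≤ ‖x‖ := le_trans (le_max_left _ _) hx
  have hr0b : r0 ≤ b := by linarith
  have key : Gam g (x + y) - Gam g y
      = (∫ s in a..r0, g s) + ∫ s in r0..b, g s := by
    unfold Gam
    rw [intervalIntegral.integral_interval_sub_left (hint 0 b le_rfl hb0)
      (hint 0 a le_rfl ha0),
      intervalIntegral.integral_add_adjacent_intervals (hint a r0 ha0 hr0pos.le)
        (hint r0 b hr0pos.le hb0)]
  have h1 : -(B*r0) ≤ ∫ s in a..r0, g s := by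
    have hmono := intervalIntegral.integral_mono_on har0
      (intervalIntegrable_const (c := -B)) (hint a r0 ha0 hr0pos.le)
      (fun s hs => by
        have := hB s ⟨le_trans ha0 hs.1, hs.2⟩
        rw [Real.norm_eq_abs] at this
        have := neg_abs_le (g s)
        linarith)
    rw [intervalIntegral.integral_const, smul_eq_mul] at hmono
    nlinarith
  have h2 : (3/4)*ginf*(b - r0) ≤ ∫ s in r0..b, g s := by
    have hmono := intervalIntegral.integral_mono_on hr0b
      (intervalIntegrable_const (c := (3/4)*ginf)) (hint r0 b hr0pos.le hb0)
      (fun s hs => (hr1 s (le_trans (le_max_left _ _) hs.1)).le)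
    rw [intervalIntegral.integral_const, smul_eq_mul] at hmono
    linarith [hmono]
  have hprod : 3*(R+r0)*ginf + 4*B*r0 + 4 ≤ ‖x‖ * ginf := by
    have hM2 : 3*(R+r0) + (4*B*r0 + 4)/ginf ≤ ‖x‖ := le_trans (le_max_right _ _) hx
    have := mul_le_mul_of_nonneg_right hM2 hginf_pos.le
    rw [add_mul, div_mul_cancel₀ _ (ne_of_gt hginf_pos)] at this
    linarith
  rw [key]
  nlinarith [mul_le_mul_of_nonneg_left hxb (by positivity : (0:ℝ) ≤ (3/4)*ginf)]
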